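/- Consider the cascade ξ̇ = -k·ξ (with k > 0) and η̇ = f₀(η) + g₀(η)ξ, where f₀ is globally exponentially stable (there is a C¹ function W₀ with c₁‖η‖² ≤ W₀(η) ≤ c₂‖η‖², ∇W₀(η)·f₀(η) ≤ -c₃‖η‖², ‖∇W₀(η)‖ ≤ c₄‖η‖) and ‖g₀(η)‖ ≤ C. Then the origin of the cascade is globally exponentially stable, and there exist constants K₁, K₂ such that ∫₀^∞ ‖ξ(t)‖² dt ≤ K₁‖ξ(0)‖²/k and ∫₀^∞ ‖η(t)‖² dt ≤ K₂(‖η(0)‖² + ‖ξ(0)‖²/k) for all k ≥ 1. -/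

import Mathlib

open MeasureTheory
open Set

private lemma gronwall_decay (V G : ℝ → ℝ) (α : ℝ)
    (hd : ∀ t, 0 ≤ t → HasDerivAt V (G t) t)
    (hle : ∀ t, 0 ≤ t → G t ≤ -α * V t) :
    ∀ t, 0 ≤ t → V t ≤ Real.exp (-α * t) * V 0 := by
  intro t ht
  set F : ℝ → ℝ := fun s => Real.exp (α * s) * V s with hF
  have hFd : ∀ s, 0 ≤ s →
      HasDerivAt F (Real.exp (α * s) * α * V s + Real.exp (α * s) * G s) s := by
    intro s hs
    have h1 : HasDerivAt (fun s : ℝ => Real.exp (α * s)) (Real.exp (α * s) * α) s := by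
      simpa using ((hasDerivAt_id s).const_mul α).exp
    have := h1.mul (hd s hs)
    have heq : Real.exp (α * s) * α * V s + Real.exp (α * s) * G s
        = Real.exp (α * s) * α * V s + Real.exp (α * s) * G s := rfl
    exact this.congr_deriv (by ring)
  have hanti : AntitoneOn F (Icc 0 t) := by
    apply antitoneOn_of_deriv_nonpos (convex_Icc 0 t)
    · intro s hs
      exact ((hFd s hs.1).continuousAt).continuousWithinAt
    · intro s hs
      rw [interior_Icc] at hs
      exact ((hFd s hs.1.le).differentiableAt).differentiableWithinAt
    · intro s hs
      rw [interior_Icc] at hs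
      rw [(hFd s hs.1.le).deriv]
      have h2 := hle s hs.1.le
      have h3 : Real.exp (α * s) * G s ≤ Real.exp (α * s) * (-α * V s) :=
        mul_le_mul_of_nonneg_left h2 (Real.exp_pos _).le
      nlinarith
  have h4 : F t ≤ F 0 := hanti (left_mem_Icc.2 ht) ⟨ht, le_refl t⟩ ht
  have h5 : F 0 = V 0 := by simp [hF]
  rw [h5] at h4
  have h6 : Real.exp (α * t) > 0 := Real.exp_pos _
  have h7 : Real.exp (-α * t) = (Real.exp (α * t))⁻¹ := by
    rw [← Real.exp_neg]; ring_nf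
  rw [h7]
  rw [hF] at h4
  calc V t = (Real.exp (α * t))⁻¹ * (Real.exp (α * t) * V t) := by
        field_simp
    _ ≤ (Real.exp (α * t))⁻¹ * V 0 := by
        apply mul_le_mul_of_nonneg_left h4 (by positivity)



private lemma xi_sol {q : ℕ} (k : ℝ) (ξ : ℝ → EuclideanSpace ℝ (Fin q))
    (hξ : ∀ t : ℝ, 0 ≤ t → HasDerivAt ξ (-(k • ξ t)) t) :
    ∀ t : ℝ, 0 ≤ t → ξ t = Real.exp (-(k * t)) • ξ 0 := by
  intro t ht
  set F : ℝ → EuclideanSpace ℝ (Fin q) := fun s => Real.exp (k * s) • ξ s with hF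
  have hFd : ∀ s, 0 ≤ s → HasDerivAt F 0 s := by
    intro s hs
    have h1 : HasDerivAt (fun s : ℝ => Real.exp (k * s)) (Real.exp (k * s) * k) s := by
      simpa using ((hasDerivAt_id s).const_mul k).exp
    have h2 := h1.smul (hξ s hs)
    exact h2.congr_deriv (by simp [smul_smul])
  have hconst : ∀ x ∈ Icc (0:ℝ) t, F x = F 0 := by
    apply constant_of_has_deriv_right_zero
    · intro s hs
      exact ((hFd s hs.1).continuousAt).continuousWithinAt
    · intro s hs
      exact (hFd s hs.1).hasDerivWithinAt
  have h3 : F t = F 0 := hconst t ⟨ht, le_refl t⟩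
  have h4 : F 0 = ξ 0 := by simp [hF]
  rw [h4] at h3
  have h5 : ξ t = Real.exp (-(k * t)) • F t := by
    rw [hF]; simp [smul_smul, ← Real.exp_add]
  rw [h5, h3]

set_option maxHeartbeats 2000000 in
private lemma key {q m : ℕ}
    (f₀ : EuclideanSpace ℝ (Fin m) → EuclideanSpace ℝ (Fin m))
    (g₀ : EuclideanSpace ℝ (Fin m) →
      (EuclideanSpace ℝ (Fin q) →L[ℝ] EuclideanSpace ℝ (Fin m)))
    (W₀ : EuclideanSpace ℝ (Fin m) → ℝ) (hW₀ : ContDiff ℝ 1 W₀)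
    (c₁ c₂ c₃ c₄ C : ℝ) (hc₁ : 0 < c₁) (hc₂ : 0 < c₂) (hc₃ : 0 < c₃)
    (hc₄ : 0 < c₄) (hC : 0 < C)
    (hW₀low : ∀ η, c₁ * ‖η‖ ^ 2 ≤ W₀ η) (hW₀high : ∀ η, W₀ η ≤ c₂ * ‖η‖ ^ 2)
    (hW₀diss : ∀ η, fderiv ℝ W₀ η (f₀ η) ≤ -(c₃ * ‖η‖ ^ 2))
    (hW₀grad : ∀ η, ‖fderiv ℝ W₀ η‖ ≤ c₄ * ‖η‖)
    (hg₀ : ∀ η, ‖g₀ η‖ ≤ C)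
    (k : ℝ) (hk : 1 ≤ k)
    (ξ : ℝ → EuclideanSpace ℝ (Fin q)) (η : ℝ → EuclideanSpace ℝ (Fin m))
    (hξ : ∀ t : ℝ, 0 ≤ t → HasDerivAt ξ (-(k • ξ t)) t)
    (hη : ∀ t : ℝ, 0 ≤ t → HasDerivAt η (f₀ (η t) + g₀ (η t) (ξ t)) t) :
    (∀ t : ℝ, 0 ≤ t → c₁ * ‖η t‖ ^ 2 ≤
      Real.exp (-(min (c₃ / (2 * c₂)) 1) * t) *
        (c₂ * ‖η 0‖ ^ 2 + (c₄ ^ 2 * C ^ 2 / (2 * c₃) / k) * ‖ξ 0‖ ^ 2)) ∧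
    (∀ T : ℝ, 0 ≤ T → (c₃ / 2) * ∫ t in (0:ℝ)..T, ‖η t‖ ^ 2 ≤
      c₂ * ‖η 0‖ ^ 2 + (c₄ ^ 2 * C ^ 2 / (2 * c₃) / k) * ‖ξ 0‖ ^ 2) := by
  have hk0 : (0:ℝ) < k := lt_of_lt_of_le one_pos hk
  obtain ⟨b, hbdef⟩ : ∃ x : ℝ, x = c₄ ^ 2 * C ^ 2 / (2 * c₃) := ⟨_, rfl⟩
  have hb : 0 < b := by rw [hbdef]; positivity
  obtain ⟨α, hαdef⟩ : ∃ x : ℝ, x = min (c₃ / (2 * c₂)) 1 := ⟨_, rfl⟩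
  have hα : 0 < α := by rw [hαdef]; exact lt_min (by positivity) one_pos
  have hα1 : α ≤ 1 := by rw [hαdef]; exact min_le_right _ _
  have hα2 : α ≤ c₃ / (2 * c₂) := by rw [hαdef]; exact min_le_left _ _
  -- the Lyapunov function
  obtain ⟨S, hSdef⟩ : ∃ S : ℝ → ℝ, S = fun t => @inner ℝ _ _ (ξ t) (ξ t) := ⟨_, rfl⟩
  obtain ⟨W, hWdef⟩ : ∃ W : ℝ → ℝ, W = fun t => W₀ (η t) := ⟨_, rfl⟩
  obtain ⟨D, hDdef⟩ : ∃ D : ℝ → ℝ,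
    D = fun t => fderiv ℝ W₀ (η t) (f₀ (η t) + g₀ (η t) (ξ t)) := ⟨_, rfl⟩
  obtain ⟨V, hVdef⟩ : ∃ V : ℝ → ℝ, V = fun t => W t + (b / k) * S t := ⟨_, rfl⟩
  obtain ⟨G, hGdef⟩ : ∃ G : ℝ → ℝ, G = fun t => D t - 2 * b * S t := ⟨_, rfl⟩
  rw [← hbdef, ← hαdef]
  have hSnorm : ∀ t, S t = ‖ξ t‖ ^ 2 := by
    intro t; rw [hSdef]; exact real_inner_self_eq_norm_sq (ξ t)
  have hSd : ∀ t, 0 ≤ t → HasDerivAt S (-(2 * k) * S t) t := by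
    intro t ht
    have h1 := HasDerivAt.inner ℝ (hξ t ht) (hξ t ht)
    have h2 : (inner ℝ (ξ t) (-(k • ξ t)) : ℝ) + inner ℝ (-(k • ξ t)) (ξ t)
        = -(2 * k) * (inner ℝ (ξ t) (ξ t) : ℝ) := by
      rw [inner_neg_right, inner_neg_left, real_inner_smul_right, real_inner_smul_left]
      ring
    rw [h2] at h1
    rw [hSdef]
    beta_reduce
    exact h1
  have hWd : ∀ t, 0 ≤ t → HasDerivAt W (D t) t := by
    intro t ht
    rw [hWdef, hDdef]
    exact ((hW₀.differentiable one_ne_zero (η t)).hasFDerivAt).comp_hasDerivAt t (hη t ht)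
  have hVd : ∀ t, 0 ≤ t → HasDerivAt V (G t) t := by
    intro t ht
    have h1 := (hWd t ht).add ((hSd t ht).const_mul (b / k))
    have h2 : HasDerivAt V (D t + b / k * (-(2 * k) * S t)) t := by
      rw [hVdef]; exact h1
    convert h2 using 1
    rw [hGdef]
    field_simp
    ring
  -- derivative estimate
  have hGle : ∀ t, 0 ≤ t → G t ≤ -(c₃ / 2) * ‖η t‖ ^ 2 - b * ‖ξ t‖ ^ 2 := by
    intro t ht
    have h1 : D t = fderiv ℝ W₀ (η t) (f₀ (η t)) + fderiv ℝ W₀ (η t) (g₀ (η t) (ξ t)) := by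
      rw [hDdef]; exact map_add _ _ _
    have h2 : fderiv ℝ W₀ (η t) (f₀ (η t)) ≤ -(c₃ * ‖η t‖ ^ 2) := hW₀diss (η t)
    have h3 : fderiv ℝ W₀ (η t) (g₀ (η t) (ξ t)) ≤ (c₄ * ‖η t‖) * (C * ‖ξ t‖) := by
      calc fderiv ℝ W₀ (η t) (g₀ (η t) (ξ t)) ≤ ‖fderiv ℝ W₀ (η t) (g₀ (η t) (ξ t))‖ :=
            le_abs_self _
        _ ≤ ‖fderiv ℝ W₀ (η t)‖ * ‖g₀ (η t) (ξ t)‖ := ContinuousLinearMap.le_opNorm _ _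
        _ ≤ (c₄ * ‖η t‖) * (C * ‖ξ t‖) := by
            apply mul_le_mul (hW₀grad (η t)) ?_ (norm_nonneg _) (by positivity)
            calc ‖g₀ (η t) (ξ t)‖ ≤ ‖g₀ (η t)‖ * ‖ξ t‖ := ContinuousLinearMap.le_opNorm _ _
              _ ≤ C * ‖ξ t‖ := mul_le_mul_of_nonneg_right (hg₀ (η t)) (norm_nonneg _)
    have h4 : G t = D t - 2 * b * ‖ξ t‖ ^ 2 := by rw [hGdef, ← hSnorm t]
    have hη0 := norm_nonneg (η t)
    have hξ0 := norm_nonneg (ξ t)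
    rw [h4, h1]
    have hyoung : (c₄ * ‖η t‖) * (C * ‖ξ t‖) ≤ (c₃ / 2) * ‖η t‖ ^ 2 + b * ‖ξ t‖ ^ 2 := by
      rw [hbdef]
      have hb2 : c₄ ^ 2 * C ^ 2 / (2 * c₃) * (2 * c₃) = c₄ ^ 2 * C ^ 2 :=
        div_mul_cancel₀ _ (by positivity)
      nlinarith [sq_nonneg (c₃ * ‖η t‖ - c₄ * C * ‖ξ t‖), hc₃,
        mul_pos hc₃ hc₃, sq_nonneg (‖η t‖), sq_nonneg (‖ξ t‖)]
    linarith
  -- comparison with -α V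
  have hGle2 : ∀ t, 0 ≤ t → G t ≤ -α * V t := by
    intro t ht
    have h1 := hGle t ht
    have h2 : V t ≤ c₂ * ‖η t‖ ^ 2 + (b / k) * ‖ξ t‖ ^ 2 := by
      rw [hVdef, hWdef, ← hSnorm t]
      have := hW₀high (η t)
      simp only
      rw [hSnorm t]
      linarith
    have hVt : α * V t ≤ (c₃ / 2) * ‖η t‖ ^ 2 + b * ‖ξ t‖ ^ 2 := by
      have hbk : b / k ≤ b := by
        rw [div_le_iff₀ hk0]; nlinarith
      have h5 : α * (c₂ * ‖η t‖ ^ 2) ≤ (c₃ / 2) * ‖η t‖ ^ 2 := by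
        have : α * c₂ ≤ c₃ / 2 := by
          calc α * c₂ ≤ (c₃ / (2 * c₂)) * c₂ :=
            mul_le_mul_of_nonneg_right hα2 hc₂.le
          _ = c₃ / 2 := by field_simp
        nlinarith [sq_nonneg ‖η t‖]
      have h6 : α * ((b / k) * ‖ξ t‖ ^ 2) ≤ b * ‖ξ t‖ ^ 2 := by
        have h7 : (b / k) * ‖ξ t‖ ^ 2 ≤ b * ‖ξ t‖ ^ 2 :=
          mul_le_mul_of_nonneg_right hbk (sq_nonneg _)
        nlinarith [sq_nonneg ‖ξ t‖, mul_nonneg (div_pos hb hk0).le (sq_nonneg ‖ξ t‖)]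
      have hVpos : 0 ≤ V t ∨ True := Or.inr trivial
      calc α * V t ≤ α * (c₂ * ‖η t‖ ^ 2 + (b / k) * ‖ξ t‖ ^ 2) :=
            mul_le_mul_of_nonneg_left h2 hα.le
        _ = α * (c₂ * ‖η t‖ ^ 2) + α * ((b / k) * ‖ξ t‖ ^ 2) := by ring
        _ ≤ (c₃ / 2) * ‖η t‖ ^ 2 + b * ‖ξ t‖ ^ 2 := add_le_add h5 h6
    have hrw : -α * V t = -(α * V t) := by ring
    rw [hrw]
    linarith
  have hV0 : V 0 ≤ c₂ * ‖η 0‖ ^ 2 + (b / k) * ‖ξ 0‖ ^ 2 := by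
    rw [hVdef, hWdef, ← hSnorm 0]
    have := hW₀high (η 0)
    simp only
    rw [hSnorm 0]
    linarith
  have hVlow : ∀ t, c₁ * ‖η t‖ ^ 2 ≤ V t := by
    intro t
    rw [hVdef, hWdef]
    have h1 := hW₀low (η t)
    have h2 : 0 ≤ (b / k) * S t := by
      apply mul_nonneg (div_pos hb hk0).le
      rw [hSnorm]; positivity
    simp only
    linarith
  have hdecay := gronwall_decay V G α hVd hGle2
  constructor
  · intro t ht
    have h1 := hdecay t ht
    have h2 : Real.exp (-α * t) * V 0 ≤
        Real.exp (-α * t) * (c₂ * ‖η 0‖ ^ 2 + (b / k) * ‖ξ 0‖ ^ 2) :=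
      mul_le_mul_of_nonneg_left hV0 (Real.exp_pos _).le
    exact le_trans (hVlow t) (le_trans h1 h2)
  · -- energy bound
    intro T hT
    have hηc : ∀ s : ℝ, 0 ≤ s → ContinuousAt η s := fun s hs => (hη s hs).continuousAt
    have hgc : ContinuousOn (fun s => ‖η s‖ ^ 2) (Ici (0:ℝ)) :=
      fun s hs => (((hηc s hs).norm).pow 2).continuousWithinAt
    have hΦcont : ContinuousOn (fun u => ∫ s in (0:ℝ)..u, ‖η s‖ ^ 2) (Icc 0 T) := by
      have h1 : IntegrableOn (fun s => ‖η s‖ ^ 2) (uIcc (0:ℝ) T) := by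
        rw [uIcc_of_le hT]
        exact (hgc.mono Icc_subset_Ici_self).integrableOn_Icc
      simpa [uIcc_of_le hT] using intervalIntegral.continuousOn_primitive_interval h1
    have hφd : ∀ x, 0 < x → HasDerivAt
        (fun u => V u + (c₃ / 2) * ∫ s in (0:ℝ)..u, ‖η s‖ ^ 2)
        (G x + (c₃ / 2) * ‖η x‖ ^ 2) x := by
      intro x hx
      have hΦd : HasDerivAt (fun u => ∫ s in (0:ℝ)..u, ‖η s‖ ^ 2) (‖η x‖ ^ 2) x := by
        apply intervalIntegral.integral_hasDerivAt_right
        · apply ContinuousOn.intervalIntegrable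
          rw [uIcc_of_le hx.le]
          exact hgc.mono Icc_subset_Ici_self
        · exact ⟨Ioi 0, Ioi_mem_nhds hx,
            (hgc.mono Ioi_subset_Ici_self).aestronglyMeasurable measurableSet_Ioi⟩
        · exact ((hηc x hx.le).norm).pow 2
      exact (hVd x hx.le).add (hΦd.const_mul (c₃ / 2))
    have hanti : AntitoneOn (fun u => V u + (c₃ / 2) * ∫ s in (0:ℝ)..u, ‖η s‖ ^ 2)
        (Icc 0 T) := by
      apply antitoneOn_of_deriv_nonpos (convex_Icc 0 T)
      · intro u hu
        exact ((hVd u hu.1).continuousAt.continuousWithinAt).add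
          ((hΦcont u hu).const_smul (c₃ / 2))
      · intro x hx
        rw [interior_Icc] at hx
        exact (hφd x hx.1).differentiableAt.differentiableWithinAt
      · intro x hx
        rw [interior_Icc] at hx
        rw [(hφd x hx.1).deriv]
        have h1 := hGle x hx.1.le
        have h2 : 0 ≤ b * ‖ξ x‖ ^ 2 := mul_nonneg hb.le (sq_nonneg _)
        linarith
    have h3 : V T + (c₃ / 2) * ∫ s in (0:ℝ)..T, ‖η s‖ ^ 2 ≤
        V 0 + (c₃ / 2) * ∫ s in (0:ℝ)..(0:ℝ), ‖η s‖ ^ 2 :=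
      hanti (left_mem_Icc.2 hT) ⟨hT, le_refl T⟩ hT
    rw [intervalIntegral.integral_same] at h3
    have h4 : 0 ≤ V T := le_trans (by positivity) (hVlow T)
    linarith

set_option maxHeartbeats 2000000 in

/-- the strict-feedback cascade `ξ̇ = -kξ`, `η̇ = f₀(η)+g₀(η)ξ`
with exponentially stable zero dynamics (certified by a Lyapunov function `W₀`)
and bounded `g₀` is globally exponentially stable, with output/state energies
`∫‖ξ‖² ≤ K₁‖ξ(0)‖²/k` and `∫‖η‖² ≤ K₂(‖η(0)‖² + ‖ξ(0)‖²/k)` uniformly in `k ≥ 1`. -/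
theorem stmt_7 {q m : ℕ}
    (f₀ : EuclideanSpace ℝ (Fin m) → EuclideanSpace ℝ (Fin m))
    (g₀ : EuclideanSpace ℝ (Fin m) →
      (EuclideanSpace ℝ (Fin q) →L[ℝ] EuclideanSpace ℝ (Fin m)))
    (W₀ : EuclideanSpace ℝ (Fin m) → ℝ) (hW₀ : ContDiff ℝ 1 W₀)
    (c₁ c₂ c₃ c₄ C : ℝ) (hc₁ : 0 < c₁) (hc₂ : 0 < c₂) (hc₃ : 0 < c₃)
    (hc₄ : 0 < c₄) (hC : 0 < C)
    (hW₀low : ∀ η, c₁ * ‖η‖ ^ 2 ≤ W₀ η) (hW₀high : ∀ η, W₀ η ≤ c₂ * ‖η‖ ^ 2)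
    (hW₀diss : ∀ η, fderiv ℝ W₀ η (f₀ η) ≤ -(c₃ * ‖η‖ ^ 2))
    (hW₀grad : ∀ η, ‖fderiv ℝ W₀ η‖ ≤ c₄ * ‖η‖)
    (hg₀ : ∀ η, ‖g₀ η‖ ≤ C) :
    -- global exponential stability of the cascade, for every gain k ≥ 1
    (∀ k : ℝ, 1 ≤ k → ∃ M > (0:ℝ), ∃ lam > (0:ℝ),
      ∀ (ξ : ℝ → EuclideanSpace ℝ (Fin q)) (η : ℝ → EuclideanSpace ℝ (Fin m)),
        (∀ t : ℝ, 0 ≤ t → HasDerivAt ξ (-(k • ξ t)) t) →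
        (∀ t : ℝ, 0 ≤ t → HasDerivAt η (f₀ (η t) + g₀ (η t) (ξ t)) t) →
        ∀ t : ℝ, 0 ≤ t →
          ‖ξ t‖ + ‖η t‖ ≤ M * Real.exp (-lam * t) * (‖ξ 0‖ + ‖η 0‖)) ∧
    -- uniform-in-k energy bounds
    (∃ K₁ > (0:ℝ), ∃ K₂ > (0:ℝ), ∀ k : ℝ, 1 ≤ k →
      ∀ (ξ : ℝ → EuclideanSpace ℝ (Fin q)) (η : ℝ → EuclideanSpace ℝ (Fin m)),
        (∀ t : ℝ, 0 ≤ t → HasDerivAt ξ (-(k • ξ t)) t) →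
        (∀ t : ℝ, 0 ≤ t → HasDerivAt η (f₀ (η t) + g₀ (η t) (ξ t)) t) →
        (∫ t in Set.Ioi (0:ℝ), ‖ξ t‖ ^ 2) ≤ K₁ * ‖ξ 0‖ ^ 2 / k ∧
        (∫ t in Set.Ioi (0:ℝ), ‖η t‖ ^ 2) ≤ K₂ * (‖η 0‖ ^ 2 + ‖ξ 0‖ ^ 2 / k)) := by
  obtain ⟨b, hbdef⟩ : ∃ x : ℝ, x = c₄ ^ 2 * C ^ 2 / (2 * c₃) := ⟨_, rfl⟩
  have hb : 0 < b := by rw [hbdef]; positivity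
  obtain ⟨α, hαdef⟩ : ∃ x : ℝ, x = min (c₃ / (2 * c₂)) 1 := ⟨_, rfl⟩
  have hα : 0 < α := by rw [hαdef]; exact lt_min (by positivity) one_pos
  have hα1 : α ≤ 1 := by rw [hαdef]; exact min_le_right _ _
  constructor
  · -- global exponential stability
    intro k hk
    have hk0 : (0:ℝ) < k := lt_of_lt_of_le one_pos hk
    refine ⟨1 + Real.sqrt ((c₂ + b) / c₁), by positivity, α / 2, by positivity, ?_⟩
    intro ξ η hξ hη t ht
    have hkey := (key f₀ g₀ W₀ hW₀ c₁ c₂ c₃ c₄ C hc₁ hc₂ hc₃ hc₄ hC hW₀low hW₀high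
      hW₀diss hW₀grad hg₀ k hk ξ η hξ hη).1 t ht
    rw [← hbdef, ← hαdef] at hkey
    have hxis := xi_sol k ξ hξ t ht
    have hexp : Real.exp (-(k * t)) ≤ Real.exp (-(α / 2) * t) := by
      apply Real.exp_le_exp.mpr
      nlinarith
    have hξb : ‖ξ t‖ ≤ Real.exp (-(α / 2) * t) * ‖ξ 0‖ := by
      rw [hxis, norm_smul, Real.norm_eq_abs, abs_of_pos (Real.exp_pos _)]
      exact mul_le_mul_of_nonneg_right hexp (norm_nonneg _)
    -- η bound
    have hbk : b / k ≤ b := by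
      rw [div_le_iff₀ hk0]; nlinarith
    have hx0 := norm_nonneg (ξ 0)
    have hy0 := norm_nonneg (η 0)
    have h1 : c₁ * ‖η t‖ ^ 2 ≤
        Real.exp (-α * t) * ((c₂ + b) * (‖η 0‖ + ‖ξ 0‖) ^ 2) := by
      refine le_trans hkey (mul_le_mul_of_nonneg_left ?_ (Real.exp_pos _).le)
      nlinarith [mul_le_mul_of_nonneg_right hbk (sq_nonneg ‖ξ 0‖),
        mul_nonneg (mul_nonneg hc₂.le hy0) hx0, mul_nonneg hb.le (mul_nonneg hy0 hx0),
        mul_nonneg hc₂.le (sq_nonneg ‖ξ 0‖), mul_nonneg hb.le (sq_nonneg ‖η 0‖)]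
    have hAnn : 0 ≤ Real.sqrt ((c₂ + b) / c₁) * Real.exp (-(α / 2) * t) * (‖η 0‖ + ‖ξ 0‖) := by
      positivity
    have hsq : ‖η t‖ ^ 2 ≤
        (Real.sqrt ((c₂ + b) / c₁) * Real.exp (-(α / 2) * t) * (‖η 0‖ + ‖ξ 0‖)) ^ 2 := by
      have hA2 : (Real.sqrt ((c₂ + b) / c₁) * Real.exp (-(α / 2) * t) * (‖η 0‖ + ‖ξ 0‖)) ^ 2
          = ((c₂ + b) / c₁) * (Real.exp (-α * t) * (‖η 0‖ + ‖ξ 0‖) ^ 2) := by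
        rw [mul_pow, mul_pow, Real.sq_sqrt (by positivity)]
        have : Real.exp (-(α / 2) * t) ^ 2 = Real.exp (-α * t) := by
          rw [sq, ← Real.exp_add]; ring_nf
        rw [this]; ring
      rw [hA2, div_mul_eq_mul_div, le_div_iff₀ hc₁]
      nlinarith [h1]
    have hηb : ‖η t‖ ≤ Real.sqrt ((c₂ + b) / c₁) * Real.exp (-(α / 2) * t) * (‖η 0‖ + ‖ξ 0‖) := by
      calc ‖η t‖ = Real.sqrt (‖η t‖ ^ 2) := (Real.sqrt_sq (norm_nonneg _)).symm
        _ ≤ Real.sqrt ((Real.sqrt ((c₂ + b) / c₁) * Real.exp (-(α / 2) * t)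
            * (‖η 0‖ + ‖ξ 0‖)) ^ 2) := Real.sqrt_le_sqrt hsq
        _ = _ := Real.sqrt_sq hAnn
    have hexp2 : 0 < Real.exp (-(α / 2) * t) := Real.exp_pos _
    have hs : 0 ≤ Real.sqrt ((c₂ + b) / c₁) := Real.sqrt_nonneg _
    nlinarith [mul_nonneg hexp2.le hy0, mul_nonneg (mul_nonneg hs hexp2.le) hx0,
      mul_nonneg (mul_nonneg hs hexp2.le) hy0]
  · -- energy bounds
    refine ⟨1, one_pos, (2 / c₃) * (c₂ + b), by positivity, ?_⟩
    intro k hk ξ η hξ hη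
    have hk0 : (0:ℝ) < k := lt_of_lt_of_le one_pos hk
    have hkey := key f₀ g₀ W₀ hW₀ c₁ c₂ c₃ c₄ C hc₁ hc₂ hc₃ hc₄ hC hW₀low hW₀high
      hW₀diss hW₀grad hg₀ k hk ξ η hξ hη
    rw [← hbdef, ← hαdef] at hkey
    have hxis := xi_sol k ξ hξ
    have hbk : b / k ≤ b := by rw [div_le_iff₀ hk0]; nlinarith
    have hx0 := norm_nonneg (ξ 0)
    have hy0 := norm_nonneg (η 0)
    constructor
    · -- ξ energy
      have heq : ∀ t : ℝ, 0 ≤ t → ‖ξ t‖ ^ 2 = ‖ξ 0‖ ^ 2 * Real.exp (-(2 * k) * t) := by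
        intro t ht
        rw [hxis t ht, norm_smul, Real.norm_eq_abs, abs_of_pos (Real.exp_pos _), mul_pow,
          sq (Real.exp _), ← Real.exp_add]
        ring_nf
      have hmodel : IntegrableOn (fun t => ‖ξ 0‖ ^ 2 * Real.exp (-(2 * k) * t)) (Ioi (0:ℝ)) :=
        (exp_neg_integrableOn_Ioi 0 (by positivity : (0:ℝ) < 2 * k)).const_mul _
      have hIntξ : IntegrableOn (fun t => ‖ξ t‖ ^ 2) (Ioi (0:ℝ)) := by
        apply hmodel.congr_fun ?_ measurableSet_Ioi
        intro t ht
        exact (heq t (le_of_lt ht)).symm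
      have htend := intervalIntegral_tendsto_integral_Ioi 0 hIntξ
        Filter.tendsto_id
      apply le_of_tendsto htend
      filter_upwards [Filter.eventually_ge_atTop (0:ℝ)] with T hT
      simp only [id_eq]
      have hcong : ∫ t in (0:ℝ)..T, ‖ξ t‖ ^ 2
          = ∫ t in (0:ℝ)..T, ‖ξ 0‖ ^ 2 * Real.exp (-(2 * k) * t) := by
        apply intervalIntegral.integral_congr
        intro t htm
        rw [uIcc_of_le hT] at htm
        exact heq t htm.1
      have hTC : ∀ x ∈ uIcc (0:ℝ) T, HasDerivAt
          (fun t => ‖ξ 0‖ ^ 2 * (-(2 * k)⁻¹ * Real.exp (-(2 * k) * t)))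
          (‖ξ 0‖ ^ 2 * Real.exp (-(2 * k) * x)) x := by
        intro x hx
        have h1 : HasDerivAt (fun x : ℝ => Real.exp (-(2 * k) * x))
            (Real.exp (-(2 * k) * x) * (-(2 * k) * 1)) x :=
          ((hasDerivAt_id x).const_mul (-(2 * k))).exp
        have h2 := (h1.const_mul (-(2 * k)⁻¹)).const_mul (‖ξ 0‖ ^ 2)
        refine h2.congr_deriv ?_
        have h4 : (2 * k)⁻¹ * (2 * k) = 1 := inv_mul_cancel₀ (by positivity)
        linear_combination (‖ξ 0‖ ^ 2 * Real.exp (-(2 * k) * x)) * h4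
      have hFTC := intervalIntegral.integral_eq_sub_of_hasDerivAt hTC
        (Continuous.intervalIntegrable (continuous_const.mul
          (Real.continuous_exp.comp (continuous_const.mul continuous_id))) _ _)
      rw [hcong, hFTC]
      beta_reduce
      have he1 : 0 < Real.exp (-(2 * k) * T) := Real.exp_pos _
      have he2 : Real.exp (-(2 * k) * 0) = 1 := by norm_num
      rw [he2]
      have hki : 0 < k⁻¹ := inv_pos.2 hk0
      have h2k : (2 * k)⁻¹ = 2⁻¹ * k⁻¹ := by rw [mul_inv]
      rw [h2k]
      have hd : (1:ℝ) * ‖ξ 0‖ ^ 2 / k = ‖ξ 0‖ ^ 2 * k⁻¹ := by ring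
      rw [hd]
      nlinarith [mul_nonneg (sq_nonneg ‖ξ 0‖) (mul_pos hki he1).le,
        mul_nonneg (sq_nonneg ‖ξ 0‖) hki.le]
    · -- η energy
      have hbound : ∀ t : ℝ, 0 ≤ t → ‖η t‖ ^ 2 ≤
          ((c₂ * ‖η 0‖ ^ 2 + b * ‖ξ 0‖ ^ 2) / c₁) * Real.exp (-α * t) := by
        intro t ht
        have h1 := hkey.1 t ht
        rw [div_mul_eq_mul_div, le_div_iff₀ hc₁]
        calc ‖η t‖ ^ 2 * c₁ = c₁ * ‖η t‖ ^ 2 := by ring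
          _ ≤ Real.exp (-α * t) * (c₂ * ‖η 0‖ ^ 2 + b / k * ‖ξ 0‖ ^ 2) := h1
          _ ≤ (c₂ * ‖η 0‖ ^ 2 + b * ‖ξ 0‖ ^ 2) * Real.exp (-α * t) := by
              rw [mul_comm]
              apply mul_le_mul_of_nonneg_right ?_ (Real.exp_pos _).le
              nlinarith [mul_le_mul_of_nonneg_right hbk (sq_nonneg ‖ξ 0‖)]
      have hηcont : ContinuousOn (fun t => ‖η t‖ ^ 2) (Ioi (0:ℝ)) := by
        intro s hs
        exact (((hη s (le_of_lt hs)).continuousAt.norm).pow 2).continuousWithinAt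
      have hIntη : IntegrableOn (fun t => ‖η t‖ ^ 2) (Ioi (0:ℝ)) := by
        apply Integrable.mono'
          ((exp_neg_integrableOn_Ioi 0 hα).const_mul
            ((c₂ * ‖η 0‖ ^ 2 + b * ‖ξ 0‖ ^ 2) / c₁))
        · exact hηcont.aestronglyMeasurable measurableSet_Ioi
        · rw [ae_restrict_iff' measurableSet_Ioi]
          filter_upwards with t ht
          rw [Real.norm_eq_abs, abs_of_nonneg (sq_nonneg _)]
          exact hbound t (le_of_lt ht)
      have htend := intervalIntegral_tendsto_integral_Ioi 0 hIntη
        Filter.tendsto_id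
      apply le_of_tendsto htend
      filter_upwards [Filter.eventually_ge_atTop (0:ℝ)] with T hT
      simp only [id_eq]
      have h2 := hkey.2 T hT
      have h3 : ∫ t in (0:ℝ)..T, ‖η t‖ ^ 2 ≤
          (2 / c₃) * (c₂ * ‖η 0‖ ^ 2 + b / k * ‖ξ 0‖ ^ 2) := by
        have hpos : (0:ℝ) < 2 / c₃ := by positivity
        calc ∫ t in (0:ℝ)..T, ‖η t‖ ^ 2
            = (2 / c₃) * ((c₃ / 2) * ∫ t in (0:ℝ)..T, ‖η t‖ ^ 2) := by
              field_simp
          _ ≤ (2 / c₃) * (c₂ * ‖η 0‖ ^ 2 + b / k * ‖ξ 0‖ ^ 2) :=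
              mul_le_mul_of_nonneg_left h2 hpos.le
      refine le_trans h3 ?_
      have h4 : c₂ * ‖η 0‖ ^ 2 + b / k * ‖ξ 0‖ ^ 2 ≤ (c₂ + b) * (‖η 0‖ ^ 2 + ‖ξ 0‖ ^ 2 / k) := by
        have h5 : 0 ≤ ‖ξ 0‖ ^ 2 / k := by positivity
        have h6 : b / k * ‖ξ 0‖ ^ 2 = b * (‖ξ 0‖ ^ 2 / k) := by ring
        nlinarith [mul_nonneg hc₂.le h5, mul_nonneg hb.le (sq_nonneg ‖η 0‖)]
      calc (2 / c₃) * (c₂ * ‖η 0‖ ^ 2 + b / k * ‖ξ 0‖ ^ 2)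
          ≤ (2 / c₃) * ((c₂ + b) * (‖η 0‖ ^ 2 + ‖ξ 0‖ ^ 2 / k)) :=
            mul_le_mul_of_nonneg_left h4 (by positivity)
        _ = (2 / c₃) * (c₂ + b) * (‖η 0‖ ^ 2 + ‖ξ 0‖ ^ 2 / k) := by ring
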